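/- Suppose ℏ_n > 0 satisfies ℏ_n⁻¹ = (2n+1)π J(E)⁻¹ + O(n⁻¹) and ℏ_n⁻¹ = (2(n+k)+1)π J(Ẽ_n)⁻¹ + O(n⁻¹) for a fixed integer k, where J is C² near E with J'(E) = T > 0 and Ẽ_n → E. Then Ẽ_n = E + (J(E)/T)(k/n) + O(n⁻²) as n → ∞. -/

import Mathlib

open Filter Asymptotics Real Topology

theorem taylor2 {J : ℝ → ℝ} {E T : ℝ} (hJ : ContDiffAt ℝ 2 J E) (hT : deriv J E = T) :
    (fun x => J x - J E - T * (x - E)) =O[nhds E] fun x => (x - E)^2 := by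
  have hd1 : ContDiffAt ℝ 1 (fderiv ℝ J) E := hJ.fderiv_right (by norm_num)
  have hdd : DifferentiableAt ℝ (deriv J) E := by
    have h : deriv J = fun x => fderiv ℝ J x 1 := by
      ext x; rw [← fderiv_apply_one_eq_deriv]
    rw [h]
    exact (hd1.differentiableAt one_ne_zero).clm_apply (differentiableAt_const _)
  have hO : (fun x => deriv J x - T) =O[nhds E] fun x => x - E := by
    have := hdd.hasDerivAt.isBigO_sub
    simpa [hT] using this
  obtain ⟨c, hc, hcO⟩ := hO.exists_pos
  rw [IsBigOWith, Metric.eventually_nhds_iff] at hcO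
  obtain ⟨δ₁, hδ₁, hball⟩ := hcO
  obtain ⟨u, hu, hcd⟩ := hJ.contDiffOn (le_refl 2) (by norm_num)
  obtain ⟨δ₂, hδ₂, hsub⟩ := Metric.mem_nhds_iff.mp hu
  set δ := min δ₁ δ₂ with hδdef
  have hδ : 0 < δ := lt_min hδ₁ hδ₂
  have hdiff : ∀ y ∈ Metric.ball E δ₂, DifferentiableAt ℝ J y := by
    intro y hy
    have : DifferentiableOn ℝ J (Metric.ball E δ₂) :=
      (hcd.mono hsub).differentiableOn (by norm_num)
    exact (this y hy).differentiableAt (Metric.isOpen_ball.mem_nhds hy)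
  refine IsBigO.of_bound c ?_
  rw [Metric.eventually_nhds_iff]
  refine ⟨δ, hδ, fun x hx => ?_⟩
  have hxd1 : |x - E| < δ₁ := lt_of_lt_of_le (by rwa [Real.dist_eq] at hx) (min_le_left _ _)
  have hxd2 : |x - E| < δ₂ := lt_of_lt_of_le (by rwa [Real.dist_eq] at hx) (min_le_right _ _)
  rcases lt_trichotomy x E with h | rfl | h
  · -- x < E
    have hIcc : Set.Icc x E ⊆ Metric.ball E δ₂ := by
      intro y hy
      rw [Metric.mem_ball, Real.dist_eq, abs_sub_lt_iff]
      rw [abs_sub_lt_iff] at hxd2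
      constructor <;> [nlinarith [hy.2]; nlinarith [hy.1, hxd2.2]]
    obtain ⟨ξ, hξ, hds⟩ := exists_hasDerivAt_eq_slope J (deriv J) h
      (fun y hy => (hdiff y (hIcc hy)).continuousAt.continuousWithinAt)
      (fun y hy => (hdiff y (hIcc (Set.mem_Icc_of_Ioo hy))).hasDerivAt)
    have hJeq : J x - J E = deriv J ξ * (x - E) := by
      have hne : E - x ≠ 0 := by linarith
      field_simp at hds
      linarith [hds]
    have hξb : |ξ - E| ≤ |x - E| := by
      rw [abs_sub_lt_iff] at hxd2
      rw [abs_of_nonpos (by linarith [hξ.2]), abs_of_nonpos (by linarith)]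
      linarith [hξ.1]
    have hder : ‖deriv J ξ - T‖ ≤ c * ‖ξ - E‖ := by
      apply hball
      rw [Real.dist_eq]
      calc |ξ - E| ≤ |x - E| := hξb
        _ < δ₁ := hxd1
    calc ‖J x - J E - T * (x - E)‖ = ‖(deriv J ξ - T)‖ * ‖x - E‖ := by
          rw [hJeq, ← norm_mul]; ring_nf
      _ ≤ (c * ‖ξ - E‖) * ‖x - E‖ := by
          apply mul_le_mul_of_nonneg_right hder (norm_nonneg _)
      _ ≤ (c * ‖x - E‖) * ‖x - E‖ := by
          apply mul_le_mul_of_nonneg_right _ (norm_nonneg _)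
          exact mul_le_mul_of_nonneg_left hξb hc.le
      _ = c * ‖(x - E)^2‖ := by
          simp only [Real.norm_eq_abs, abs_pow]; ring
  · simp
  · -- E < x
    have hIcc : Set.Icc E x ⊆ Metric.ball E δ₂ := by
      intro y hy
      rw [Metric.mem_ball, Real.dist_eq, abs_sub_lt_iff]
      rw [abs_sub_lt_iff] at hxd2
      constructor <;> [nlinarith [hy.2, hxd2.1]; nlinarith [hy.1]]
    obtain ⟨ξ, hξ, hds⟩ := exists_hasDerivAt_eq_slope J (deriv J) h
      (fun y hy => (hdiff y (hIcc hy)).continuousAt.continuousWithinAt)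
      (fun y hy => (hdiff y (hIcc (Set.mem_Icc_of_Ioo hy))).hasDerivAt)
    have hJeq : J x - J E = deriv J ξ * (x - E) := by
      have hne : x - E ≠ 0 := by linarith
      field_simp at hds
      linarith [hds]
    have hξb : |ξ - E| ≤ |x - E| := by
      rw [abs_of_nonneg (by linarith [hξ.1]), abs_of_nonneg (by linarith)]
      linarith [hξ.2]
    have hder : ‖deriv J ξ - T‖ ≤ c * ‖ξ - E‖ := by
      apply hball
      rw [Real.dist_eq]
      calc |ξ - E| ≤ |x - E| := hξb
        _ < δ₁ := hxd1
    calc ‖J x - J E - T * (x - E)‖ = ‖(deriv J ξ - T)‖ * ‖x - E‖ := by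
          rw [hJeq, ← norm_mul]; ring_nf
      _ ≤ (c * ‖ξ - E‖) * ‖x - E‖ := by
          apply mul_le_mul_of_nonneg_right hder (norm_nonneg _)
      _ ≤ (c * ‖x - E‖) * ‖x - E‖ := by
          apply mul_le_mul_of_nonneg_right _ (norm_nonneg _)
          exact mul_le_mul_of_nonneg_left hξb hc.le
      _ = c * ‖(x - E)^2‖ := by
          simp only [Real.norm_eq_abs, abs_pow]; ring

/-- Eigenvalue spacing from the Bohr–Sommerfeld condition: if
`ℏ_n⁻¹ = (2n+1)π J(E)⁻¹ + O(n⁻¹)` and `ℏ_n⁻¹ = (2(n+k)+1)π J(Ẽ_n)⁻¹ + O(n⁻¹)` with `J`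
of class `C²` near `E`, `J'(E) = T > 0`, `J(E) > 0` and `Ẽ_n → E`, then
`Ẽ_n = E + (J(E)/T)(k/n) + O(n⁻²)`. -/
theorem stmt16 (k : ℤ) (E T : ℝ) (J : ℝ → ℝ) (ℏ Et : ℕ → ℝ)
    (hℏpos : ∀ n, 0 < ℏ n)
    (hJ : ContDiffAt ℝ 2 J E) (hT : deriv J E = T) (hTpos : 0 < T) (hJpos : 0 < J E)
    (hEt : Tendsto Et atTop (nhds E))
    (h1 : (fun n : ℕ => (ℏ n)⁻¹ - (2*(n:ℝ)+1) * π * (J E)⁻¹) =O[atTop]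
      fun n : ℕ => ((n:ℝ))⁻¹)
    (h2 : (fun n : ℕ => (ℏ n)⁻¹ - (2*((n:ℝ)+(k:ℝ))+1) * π * (J (Et n))⁻¹) =O[atTop]
      fun n : ℕ => ((n:ℝ))⁻¹) :
    (fun n : ℕ => Et n - E - (J E / T) * ((k:ℝ) / (n:ℝ))) =O[atTop]
      fun n : ℕ => ((n:ℝ)^2)⁻¹ := by
  have hT0 : T ≠ 0 := ne_of_gt hTpos
  have ha0 : J E ≠ 0 := ne_of_gt hJpos
  have hπ : (0:ℝ) < π := Real.pi_pos
  -- difference of the two Bohr–Sommerfeld conditions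
  have hD : (fun n : ℕ => (2*((n:ℝ)+(k:ℝ))+1)*π*(J (Et n))⁻¹ - (2*(n:ℝ)+1)*π*(J E)⁻¹)
      =O[atTop] fun n : ℕ => ((n:ℝ))⁻¹ := by
    have := h1.sub h2
    exact this.congr_left (fun n => by ring)
  -- J (Et n) → J E
  have hb : Tendsto (fun n => J (Et n)) atTop (nhds (J E)) :=
    (hJ.continuousAt.tendsto).comp hEt
  have hbev : ∀ᶠ n in atTop, J E / 2 < J (Et n) :=
    hb.eventually (eventually_gt_nhds (by linarith))
  -- key: (2n+1) b n - (2n+2k+1) a = O(1/n)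
  have hg : (fun n : ℕ => (2*(n:ℝ)+1) * (J (Et n)) - (2*(n:ℝ)+2*(k:ℝ)+1) * (J E))
      =O[atTop] fun n : ℕ => ((n:ℝ))⁻¹ := by
    have hcoef : Tendsto (fun n : ℕ => -(J E * J (Et n) / π)) atTop
        (nhds (-(J E * J E / π))) := by
      exact (((tendsto_const_nhds (x := J E)).mul hb).div_const π).neg
    have hcO : (fun n : ℕ => -(J E * J (Et n) / π)) =O[atTop] (fun _ => (1:ℝ)) :=
      hcoef.isBigO_one ℝ
    have hmul := hcO.mul hD
    have : (fun n : ℕ => -(J E * J (Et n) / π) *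
        ((2*((n:ℝ)+(k:ℝ))+1)*π*(J (Et n))⁻¹ - (2*(n:ℝ)+1)*π*(J E)⁻¹))
        =O[atTop] fun n : ℕ => ((n:ℝ))⁻¹ := hmul.congr_right (fun n => one_mul _)
    refine IsBigO.congr' (this) ?_ (EventuallyEq.refl _ _)
    filter_upwards [hbev] with n hbn
    have hb0 : J (Et n) ≠ 0 := by linarith
    field_simp
    ring
  -- s n := b n - a - a k / n = O(1/n * 1/n)
  have hinv : (fun n : ℕ => (2*(n:ℝ)+1)⁻¹) =O[atTop] fun n : ℕ => ((n:ℝ))⁻¹ := by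
    refine IsBigO.of_bound 1 ?_
    filter_upwards [eventually_ge_atTop 1] with n hn
    have hn1 : (1:ℝ) ≤ (n:ℝ) := by exact_mod_cast hn
    rw [Real.norm_eq_abs, Real.norm_eq_abs, abs_of_nonneg (by positivity),
      abs_of_nonneg (by positivity), one_mul]
    exact inv_anti₀ (by linarith) (by linarith)
  have hs : (fun n : ℕ => J (Et n) - J E - (J E)*((k:ℝ)/(n:ℝ)))
      =O[atTop] fun n : ℕ => ((n:ℝ))⁻¹ * ((n:ℝ))⁻¹ := by
    have h1' := hg.mul hinv
    have h2' : (fun n : ℕ => -((J E)*(k:ℝ)) * (((n:ℝ))⁻¹ * (2*(n:ℝ)+1)⁻¹))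
        =O[atTop] fun n : ℕ => ((n:ℝ))⁻¹ * ((n:ℝ))⁻¹ := by
      have := ((isBigO_refl (fun n : ℕ => ((n:ℝ))⁻¹) atTop).mul hinv).const_mul_left
        (-((J E)*(k:ℝ)))
      exact this
    have hsum := h1'.add h2'
    refine IsBigO.congr' hsum ?_ (EventuallyEq.refl _ _)
    filter_upwards [eventually_ge_atTop 1] with n hn
    have hn0 : ((n:ℝ)) ≠ 0 := by positivity
    have h2n : (2*(n:ℝ)+1) ≠ 0 := by positivity
    field_simp
    ring
  
  -- Et n - E = O(1/n)
  have hsq_le : (fun n : ℕ => ((n:ℝ))⁻¹ * ((n:ℝ))⁻¹) =O[atTop] fun n : ℕ => ((n:ℝ))⁻¹ := by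
    refine IsBigO.of_bound 1 ?_
    filter_upwards [eventually_ge_atTop 1] with n hn
    have hn1 : (1:ℝ) ≤ (n:ℝ) := by exact_mod_cast hn
    have h1 : ((n:ℝ))⁻¹ ≤ 1 := by
      rw [inv_le_one_iff₀]; right; linarith
    rw [Real.norm_eq_abs, Real.norm_eq_abs, abs_of_nonneg (by positivity),
      abs_of_nonneg (by positivity), one_mul]
    nlinarith [inv_nonneg.mpr (le_trans zero_le_one hn1)]
  have hba : (fun n : ℕ => J (Et n) - J E) =O[atTop] fun n : ℕ => ((n:ℝ))⁻¹ := by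
    have h2' : (fun n : ℕ => (J E)*((k:ℝ)/(n:ℝ))) =O[atTop] fun n : ℕ => ((n:ℝ))⁻¹ := by
      have := (isBigO_refl (fun n : ℕ => ((n:ℝ))⁻¹) atTop).const_mul_left ((J E)*(k:ℝ))
      exact this.congr_left (fun n => by rw [div_eq_mul_inv]; ring)
    have := (hs.trans hsq_le).add h2'
    exact this.congr_left (fun n => by ring)
  have hrev : (fun x => x - E) =O[nhds E] fun x => J x - J E := by
    have hder : HasDerivAt J T E := by
      have := (hJ.differentiableAt two_ne_zero).hasDerivAt
      rwa [hT] at this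
    exact ((hder.hasDerivAtFilter le_rfl).isBigO_sub_rev hT0).comp_tendsto
      (tendsto_id.prodMk (tendsto_pure.2 (Eventually.of_forall fun _ => rfl)))
  have hE1 : (fun n : ℕ => Et n - E) =O[atTop] fun n : ℕ => ((n:ℝ))⁻¹ :=
    (hrev.comp_tendsto hEt).trans hba
  -- Taylor along the sequence
  have htay : (fun n : ℕ => J (Et n) - J E - T * (Et n - E)) =O[atTop]
      fun n : ℕ => ((n:ℝ))⁻¹ * ((n:ℝ))⁻¹ := by
    have := (taylor2 hJ hT).comp_tendsto hEt
    refine this.trans ?_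
    have := hE1.mul hE1
    exact this.congr_left (fun n => by simp only [Function.comp_apply]; ring)
  -- combine
  have hfin := (hs.sub htay).const_mul_left T⁻¹
  have : (fun n : ℕ => Et n - E - (J E / T) * ((k:ℝ) / (n:ℝ))) =O[atTop]
      fun n : ℕ => ((n:ℝ))⁻¹ * ((n:ℝ))⁻¹ := by
    refine hfin.congr_left (fun n => ?_)
    have h : T⁻¹ * (J (Et n) - J E - J E * ((k:ℝ)/(n:ℝ)) - (J (Et n) - J E - T * (Et n - E)))
        = T⁻¹ * T * (Et n - E) - T⁻¹ * (J E * ((k:ℝ)/(n:ℝ))) := by ring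
    rw [h, inv_mul_cancel₀ hT0, one_mul, div_mul_eq_mul_div, div_eq_inv_mul]; rw [div_eq_inv_mul]
  exact this.congr_right (fun n => by rw [sq, mul_inv])
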